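/- Let n ≥ 2 be an integer, let ν be a Borel probability measure on ℝ with ν([0, B]) = 1, let F(t) = ν((−∞, t]) be its CDF, and let V₁, …, V_n be i.i.d. with law ν; write V⁽¹⁾ for the largest and V⁽²⁾ for the second-largest among V₁, …, V_n. Then for every r ∈ [0, B]: E[r·1{V⁽²⁾ ≤ r < V⁽¹⁾}] + E[V⁽²⁾·1{V⁽²⁾ > r}] = r·(1 − F(r)ⁿ) + ∫_r^B (1 − n·F(t)^{n−1} + (n−1)·F(t)ⁿ) dt. -/

import Mathlib

open MeasureTheory ProbabilityTheory
open scoped ENNReal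

noncomputable def firstMax (n : ℕ) (v : Fin n → ℝ) : ℝ :=
  if h : (Finset.univ : Finset (Fin n)).Nonempty then Finset.univ.sup' h v else 0

noncomputable def secondMax (n : ℕ) (v : Fin n → ℝ) : ℝ :=
  if h : ((Finset.univ : Finset (Fin n)).offDiag).Nonempty then
    (Finset.univ : Finset (Fin n)).offDiag.sup' h (fun p => min (v p.1) (v p.2)) else 0

section aux
variable {n : ℕ}

lemma univ_ne (hn : 2 ≤ n) : (Finset.univ : Finset (Fin n)).Nonempty :=
  ⟨⟨0, by omega⟩, Finset.mem_univ _⟩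

lemma offDiag_ne (hn : 2 ≤ n) : ((Finset.univ : Finset (Fin n)).offDiag).Nonempty := by
  refine ⟨(⟨0, by omega⟩, ⟨1, by omega⟩), Finset.mem_offDiag.2 ⟨Finset.mem_univ _, Finset.mem_univ _, ?_⟩⟩
  simp [Fin.ext_iff]

lemma firstMax_le_iff (hn : 2 ≤ n) {v : Fin n → ℝ} {t : ℝ} :
    firstMax n v ≤ t ↔ ∀ i, v i ≤ t := by
  rw [firstMax, dif_pos (univ_ne hn), Finset.sup'_le_iff]
  simp

lemma secondMax_le_iff (hn : 2 ≤ n) {v : Fin n → ℝ} {t : ℝ} :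
    secondMax n v ≤ t ↔ ∃ i, ∀ j, j ≠ i → v j ≤ t := by
  rw [secondMax, dif_pos (offDiag_ne hn), Finset.sup'_le_iff]
  constructor
  · intro h
    by_cases hex : ∃ i, t < v i
    · obtain ⟨i, hi⟩ := hex
      refine ⟨i, fun j hj => ?_⟩
      have := h (j, i) (Finset.mem_offDiag.2 ⟨Finset.mem_univ _, Finset.mem_univ _, hj⟩)
      simp only [min_le_iff] at this
      rcases this with h1 | h1
      · exact h1
      · exact absurd h1 (not_le.2 hi)
    · push_neg at hex
      exact ⟨⟨0, by omega⟩, fun j _ => hex j⟩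
  · rintro ⟨i, hi⟩ ⟨a, b⟩ hab
    rw [Finset.mem_offDiag] at hab
    rcases ne_or_eq a i with ha | ha
    · exact min_le_of_left_le (hi a ha)
    · subst ha
      exact min_le_of_right_le (hi b hab.2.2.symm)

lemma secondMax_le_firstMax (hn : 2 ≤ n) (v : Fin n → ℝ) :
    secondMax n v ≤ firstMax n v := by
  rw [firstMax, dif_pos (univ_ne hn), secondMax, dif_pos (offDiag_ne hn), Finset.sup'_le_iff]
  rintro ⟨a, b⟩ _
  exact min_le_of_left_le (Finset.le_sup' v (Finset.mem_univ a))

lemma secondMax_nonneg (hn : 2 ≤ n) {v : Fin n → ℝ} (hv : ∀ i, 0 ≤ v i) :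
    0 ≤ secondMax n v := by
  rw [secondMax, dif_pos (offDiag_ne hn)]
  obtain ⟨p, hp⟩ := offDiag_ne hn
  exact le_trans (le_min (hv p.1) (hv p.2))
    (Finset.le_sup' (f := fun q : Fin n × Fin n => min (v q.1) (v q.2)) hp)

lemma measurable_firstMax (hn : 2 ≤ n) {Ω : Type} [MeasurableSpace Ω] {V : Fin n → Ω → ℝ}
    (hm : ∀ i, Measurable (V i)) : Measurable (fun ω => firstMax n (fun i => V i ω)) := by
  simp only [firstMax, dif_pos (univ_ne hn)]
  have h2 : (fun ω => Finset.univ.sup' (univ_ne hn) fun i => V i ω)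
      = Finset.univ.sup' (univ_ne hn) V := by
    ext ω; simp [Finset.sup'_apply]
  rw [h2]
  exact Finset.measurable_sup' _ (fun i _ => hm i)

lemma measurable_secondMax (hn : 2 ≤ n) {Ω : Type} [MeasurableSpace Ω] {V : Fin n → Ω → ℝ}
    (hm : ∀ i, Measurable (V i)) : Measurable (fun ω => secondMax n (fun i => V i ω)) := by
  simp only [secondMax, dif_pos (offDiag_ne hn)]
  have h2 : (fun ω => Finset.univ.offDiag.sup' (offDiag_ne hn) fun p => min (V p.1 ω) (V p.2 ω))
      = Finset.univ.offDiag.sup' (offDiag_ne hn) (fun p ω => min (V p.1 ω) (V p.2 ω)) := by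
    ext ω; simp [Finset.sup'_apply]
  rw [h2]
  exact Finset.measurable_sup' _ (fun p _ => (hm p.1).min (hm p.2))

end aux

theorem n_bidder_revenue_formula (n : ℕ) (hn : 2 ≤ n) (B : ℝ) (hB : 0 < B)
    (ν : Measure ℝ) [IsProbabilityMeasure ν] (hν : ν (Set.Icc 0 B) = 1)
    (F : ℝ → ℝ) (hF : ∀ t, F t = (ν (Set.Iic t)).toReal)
    (Ω : Type) [MeasureSpace Ω] [IsProbabilityMeasure (volume : Measure Ω)]
    (V : Fin n → Ω → ℝ) (hm : ∀ i, Measurable (V i))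
    (hl : ∀ i, Measure.map (V i) volume = ν)
    (hind : iIndepFun V volume)
    (r : ℝ) (hr : r ∈ Set.Icc (0 : ℝ) B) :
    (∫ ω, ({ω : Ω | secondMax n (fun i => V i ω) ≤ r ∧
        r < firstMax n (fun i => V i ω)}.indicator (fun _ => r) ω))
      + (∫ ω, ({ω : Ω | r < secondMax n (fun i => V i ω)}.indicator
        (fun ω => secondMax n (fun i => V i ω)) ω))
      = r * (1 - (F r) ^ n)
        + ∫ t in r..B, (1 - (n : ℝ) * (F t) ^ (n - 1) + ((n : ℝ) - 1) * (F t) ^ n) := by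
  classical
  have hr0 : 0 ≤ r := hr.1
  have hrB : r ≤ B := hr.2
  set W : Ω → ℝ := fun ω => firstMax n (fun i => V i ω) with hWdef
  set S : Ω → ℝ := fun ω => secondMax n (fun i => V i ω) with hSdef
  have hWm : Measurable W := measurable_firstMax hn hm
  have hSm : Measurable S := measurable_secondMax hn hm
  have hpre : ∀ i (s : Set ℝ), MeasurableSet s → volume (V i ⁻¹' s) = ν s := by
    intro i s hs
    rw [← hl i, Measure.map_apply (hm i) hs]
  -- distribution of the max
  have hprodIic : ∀ t : ℝ, volume (⋂ i, V i ⁻¹' Set.Iic t) = ν (Set.Iic t) ^ n := by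
    intro t
    rw [hind.meas_iInter (fun i => ⟨Set.Iic t, measurableSet_Iic, rfl⟩)]
    simp only [hpre _ _ measurableSet_Iic]
    rw [Finset.prod_const, Finset.card_univ, Fintype.card_fin]
  have hWdist : ∀ t : ℝ, (volume {ω | W ω ≤ t}).toReal = F t ^ n := by
    intro t
    have hset : {ω | W ω ≤ t} = ⋂ i, V i ⁻¹' Set.Iic t := by
      ext ω
      simp only [Set.mem_setOf_eq, hWdef, firstMax_le_iff hn, Set.mem_iInter,
        Set.mem_preimage, Set.mem_Iic]
    rw [hset, hprodIic, ENNReal.toReal_pow, hF]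
  -- distribution of the second max
  have hSdist : ∀ t : ℝ, (volume {ω | S ω ≤ t}).toReal
      = F t ^ n + n * ((1 - F t) * F t ^ (n-1)) := by
    intro t
    set A : Set Ω := ⋂ i, V i ⁻¹' Set.Iic t with hA
    set C : Fin n → Set Ω := fun i => ⋂ j, V j ⁻¹' (if j = i then Set.Ioi t else Set.Iic t)
      with hC
    have hCmem : ∀ i ω, ω ∈ C i ↔ (t < V i ω ∧ ∀ j, j ≠ i → V j ω ≤ t) := by
      intro i ω
      simp only [hC, Set.mem_iInter, Set.mem_preimage]
      constructor
      · intro h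
        refine ⟨by simpa using h i, fun j hj => by simpa [if_neg hj] using h j⟩
      · rintro ⟨h1, h2⟩ j
        rcases eq_or_ne j i with rfl | hj
        · simpa using h1
        · simpa [if_neg hj] using h2 j hj
    have hAmem : ∀ ω, ω ∈ A ↔ ∀ i, V i ω ≤ t := by
      intro ω; simp [hA]
    have hset : {ω | S ω ≤ t} = A ∪ ⋃ i, C i := by
      ext ω
      simp only [Set.mem_setOf_eq, hSdef, secondMax_le_iff hn, Set.mem_union, Set.mem_iUnion]
      constructor
      · rintro ⟨i, hi⟩
        by_cases hvi : V i ω ≤ t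
        · left
          rw [hAmem]
          intro j
          rcases eq_or_ne j i with rfl | hj
          · exact hvi
          · exact hi j hj
        · right
          exact ⟨i, (hCmem i ω).2 ⟨not_le.1 hvi, hi⟩⟩
      · rintro (h | ⟨i, hi⟩)
        · exact ⟨⟨0, by omega⟩, fun j _ => (hAmem ω).1 h j⟩
        · exact ⟨i, ((hCmem i ω).1 hi).2⟩
    have hAmeas : MeasurableSet A := MeasurableSet.iInter (fun i => hm i measurableSet_Iic)
    have hCmeas : ∀ i, MeasurableSet (C i) := by
      intro i
      refine MeasurableSet.iInter (fun j => hm j ?_)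
      split
      exacts [measurableSet_Ioi, measurableSet_Iic]
    have hdisjC : Pairwise (Function.onFun Disjoint C) := by
      intro i k hik
      simp only [Function.onFun]
      rw [Set.disjoint_left]
      intro ω hωi hωk
      have h1 := ((hCmem i ω).1 hωi).2 k (Ne.symm hik)
      have h2 := ((hCmem k ω).1 hωk).1
      exact absurd h1 (not_le.2 h2)
    have hdisjAC : Disjoint A (⋃ i, C i) := by
      rw [Set.disjoint_left]
      intro ω hωA hωC
      obtain ⟨i, hi⟩ := Set.mem_iUnion.1 hωC
      exact absurd ((hAmem ω).1 hωA i) (not_le.2 ((hCmem i ω).1 hi).1)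
    have hCvol : ∀ i, volume (C i) = ν (Set.Ioi t) * ν (Set.Iic t) ^ (n - 1) := by
      intro i
      rw [hC]
      rw [hind.meas_iInter (fun j => ⟨if j = i then Set.Ioi t else Set.Iic t,
        by split; exacts [measurableSet_Ioi, measurableSet_Iic], rfl⟩)]
      have hite : ∀ j, volume (V j ⁻¹' (if j = i then Set.Ioi t else Set.Iic t))
          = if j = i then ν (Set.Ioi t) else ν (Set.Iic t) := by
        intro j
        split
        exacts [hpre _ _ measurableSet_Ioi, hpre _ _ measurableSet_Iic]
      simp only [hite]
      rw [← Finset.mul_prod_erase Finset.univ _ (Finset.mem_univ i), if_pos rfl]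
      congr 1
      rw [Finset.prod_congr rfl (fun j hj => if_neg (Finset.ne_of_mem_erase hj)),
        Finset.prod_const, Finset.card_erase_of_mem (Finset.mem_univ i),
        Finset.card_univ, Fintype.card_fin]
    have hvol : volume {ω | S ω ≤ t}
        = ν (Set.Iic t) ^ n + n * (ν (Set.Ioi t) * ν (Set.Iic t) ^ (n - 1)) := by
      rw [hset, measure_union hdisjAC (MeasurableSet.iUnion hCmeas),
        measure_iUnion hdisjC hCmeas, tsum_fintype]
      simp only [hCvol, Finset.sum_const, Finset.card_univ, Fintype.card_fin, nsmul_eq_mul]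
      rw [hA, hprodIic]
    have hIoi : (ν (Set.Ioi t)).toReal = 1 - F t := by
      rw [← Set.compl_Iic, prob_compl_eq_one_sub measurableSet_Iic,
        ENNReal.toReal_sub_of_le prob_le_one ENNReal.one_ne_top, ENNReal.toReal_one, hF]
    have h1 : ν (Set.Iic t) ^ n ≠ ⊤ := ENNReal.pow_ne_top (measure_ne_top ν _)
    have h2 : (n : ℝ≥0∞) * (ν (Set.Ioi t) * ν (Set.Iic t) ^ (n - 1)) ≠ ⊤ :=
      ENNReal.mul_ne_top (ENNReal.natCast_ne_top n)
        (ENNReal.mul_ne_top (measure_ne_top _ _) (ENNReal.pow_ne_top (measure_ne_top _ _)))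
    rw [hvol, ENNReal.toReal_add h1 h2, ENNReal.toReal_mul, ENNReal.toReal_mul,
      ENNReal.toReal_pow, ENNReal.toReal_pow, hIoi, hF]
    norm_num
  have hScompl : ∀ t : ℝ, (volume {ω | t < S ω}).toReal
      = 1 - (volume {ω | S ω ≤ t}).toReal := by
    intro t
    have : {ω | t < S ω} = {ω | S ω ≤ t}ᶜ := by ext ω; simp
    rw [this, prob_compl_eq_one_sub (s := {ω | S ω ≤ t}) (hSm measurableSet_Iic)]
    rw [ENNReal.toReal_sub_of_le prob_le_one ENNReal.one_ne_top, ENNReal.toReal_one]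
  have hae : ∀ᵐ ω, (0 ≤ S ω ∧ S ω ≤ B) := by
    have hai : ∀ i, ∀ᵐ ω, V i ω ∈ Set.Icc 0 B := by
      intro i
      rw [ae_iff]
      have : {ω | ¬ V i ω ∈ Set.Icc 0 B} = (V i ⁻¹' Set.Icc 0 B)ᶜ := rfl
      rw [this, prob_compl_eq_one_sub (hm i measurableSet_Icc), hpre i _ measurableSet_Icc,
        hν, tsub_self]
    filter_upwards [ae_all_iff.2 hai] with ω hω
    refine ⟨secondMax_nonneg hn (fun i => (hω i).1), ?_⟩
    exact (secondMax_le_iff hn).2 ⟨⟨0, by omega⟩, fun j _ => (hω j).2⟩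
  have hT1 : (∫ ω, ({ω : Ω | S ω ≤ r ∧ r < W ω}.indicator (fun _ => r) ω))
      = r * ((volume {ω | S ω ≤ r}).toReal - (volume {ω | W ω ≤ r}).toReal) := by
    have hset : {ω : Ω | S ω ≤ r ∧ r < W ω} = {ω | S ω ≤ r} \ {ω | W ω ≤ r} := by
      ext ω
      simp only [Set.mem_setOf_eq, Set.mem_diff, not_le]
    have hsub : {ω | W ω ≤ r} ⊆ {ω | S ω ≤ r} := fun ω h =>
      le_trans (secondMax_le_firstMax hn _) h
    have hWms : MeasurableSet {ω | W ω ≤ r} := hWm measurableSet_Iic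
    have hSms : MeasurableSet {ω | S ω ≤ r} := hSm measurableSet_Iic
    rw [hset, integral_indicator_const _ (hSms.diff hWms), measureReal_def,
      measure_diff hsub hWms.nullMeasurableSet (measure_ne_top _ _),
      ENNReal.toReal_sub_of_le (measure_mono hsub) (measure_ne_top _ _), smul_eq_mul,
      mul_comm]
  have hT2 : (∫ ω, ({ω | r < S ω}.indicator S ω))
      = r * (volume {ω | r < S ω}).toReal
        + ∫ t in Set.Ioc r B, (volume {ω | t < S ω}).toReal := by
    haveI hFin : IsFiniteMeasure (volume.restrict (Set.Ioc r B)) := by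
      constructor
      rw [Measure.restrict_apply_univ, Real.volume_Ioc]
      exact ENNReal.ofReal_lt_top
    have hsm : ∀ t : ℝ, MeasurableSet {ω | t < S ω} := fun t => hSm measurableSet_Ioi
    have hrm : MeasurableSet {ω | r < S ω} := hsm r
    have hptws : (fun ω => ({ω | r < S ω}.indicator S ω))
        = fun ω => r * ({ω | r < S ω}.indicator (fun _ => (1:ℝ)) ω) + max (S ω - r) 0 := by
      funext ω
      by_cases h : r < S ω
      · simp only [Set.indicator_apply, Set.mem_setOf_eq, if_pos h,
          max_eq_left (show (0:ℝ) ≤ S ω - r by linarith)]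
        ring
      · have h' := not_lt.1 h
        simp only [Set.indicator_apply, Set.mem_setOf_eq, if_neg h,
          max_eq_right (show S ω - r ≤ 0 by linarith)]
        ring
    have hintA : Integrable (fun ω => r * ({ω | r < S ω}.indicator (fun _ => (1:ℝ)) ω))
        volume := ((integrable_const (1:ℝ)).indicator hrm).const_mul r
    have hintB : Integrable (fun ω => max (S ω - r) 0) volume := by
      refine Integrable.mono' (integrable_const (B - r)) ?_ ?_
      · exact ((hSm.sub measurable_const).max measurable_const).aestronglyMeasurable
      · filter_upwards [hae] with ω hω
        rw [Real.norm_eq_abs, abs_of_nonneg (le_max_right _ _)]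
        exact max_le (by linarith [hω.2]) (by linarith)
    rw [show (∫ ω, ({ω | r < S ω}.indicator S ω)) = ∫ ω, (r * ({ω | r < S ω}.indicator
        (fun _ => (1:ℝ)) ω) + max (S ω - r) 0) from by rw [← hptws],
      integral_add hintA hintB, integral_const_mul,
      integral_indicator_const _ hrm, measureReal_def, smul_eq_mul, mul_one]
    congr 1
    set f : Ω → ℝ → ℝ :=
      fun ω t => Set.indicator {p : Ω × ℝ | p.2 < S p.1} (fun _ => (1:ℝ)) (ω, t) with hf
    have hPm : MeasurableSet {p : Ω × ℝ | p.2 < S p.1} :=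
      measurableSet_lt measurable_snd (hSm.comp measurable_fst)
    have hinner : ∀ ω, S ω ≤ B → (∫ t in Set.Ioc r B, f ω t) = max (S ω - r) 0 := by
      intro ω hωB
      have hfe : (fun t => f ω t) = Set.indicator (Set.Iio (S ω)) (fun _ => (1:ℝ)) := by
        funext t
        simp only [hf, Set.indicator_apply, Set.mem_setOf_eq, Set.mem_Iio]
      rw [hfe, setIntegral_indicator measurableSet_Iio]
      have hio : Set.Ioc r B ∩ Set.Iio (S ω) = Set.Ioo r (S ω) := by
        ext x
        simp only [Set.mem_inter_iff, Set.mem_Ioc, Set.mem_Iio, Set.mem_Ioo]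
        constructor
        · rintro ⟨⟨h1, h2⟩, h3⟩
          exact ⟨h1, h3⟩
        · rintro ⟨h1, h2⟩
          exact ⟨⟨h1, le_trans h2.le hωB⟩, h2⟩
      rw [hio, setIntegral_const, measureReal_def, Real.volume_Ioo, smul_eq_mul, mul_one,
        ENNReal.toReal_ofReal']
    have hswap1 : (∫ ω, max (S ω - r) 0) = ∫ ω, ∫ t in Set.Ioc r B, f ω t := by
      refine integral_congr_ae ?_
      filter_upwards [hae] with ω hω
      rw [hinner ω hω.2]
    have hintP : Integrable (Function.uncurry f)
        (volume.prod (volume.restrict (Set.Ioc r B))) := by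
      have huc : Function.uncurry f
          = Set.indicator {p : Ω × ℝ | p.2 < S p.1} (fun _ => (1:ℝ)) := rfl
      rw [huc]
      exact (integrable_const (1:ℝ)).indicator hPm
    rw [hswap1, integral_integral_swap hintP]
    refine integral_congr_ae (Filter.Eventually.of_forall fun t => ?_)
    show (∫ ω, f ω t) = (volume {ω | t < S ω}).toReal
    have hfe2 : (fun ω => f ω t) = Set.indicator {ω | t < S ω} (fun _ => (1:ℝ)) := by
      funext ω
      simp only [hf, Set.indicator_apply, Set.mem_setOf_eq]
    rw [hfe2, integral_indicator_const _ (hsm t), measureReal_def, smul_eq_mul, mul_one]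
  have hRHS : (∫ t in r..B, (1 - (n:ℝ) * F t ^ (n-1) + ((n:ℝ)-1) * F t ^ n))
      = ∫ t in Set.Ioc r B, (volume {ω | t < S ω}).toReal := by
    rw [intervalIntegral.integral_of_le hrB]
    have heq : ∀ t : ℝ, (volume {ω | t < S ω}).toReal
        = 1 - (n:ℝ) * F t ^ (n-1) + ((n:ℝ)-1) * F t ^ n := by
      intro t
      rw [hScompl, hSdist]
      have hpow : F t ^ n = F t ^ (n-1) * F t := by
        rw [← pow_succ]
        congr 1
        omega
      rw [hpow]
      ring
    simp_rw [heq]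
  calc (∫ ω, ({ω : Ω | S ω ≤ r ∧ r < W ω}.indicator (fun _ => r) ω))
      + (∫ ω, ({ω | r < S ω}.indicator S ω))
      = r * ((volume {ω | S ω ≤ r}).toReal - (volume {ω | W ω ≤ r}).toReal)
        + (r * (volume {ω | r < S ω}).toReal
          + ∫ t in Set.Ioc r B, (volume {ω | t < S ω}).toReal) := by rw [hT1, hT2]
    _ = r * (1 - (F r) ^ n)
        + ∫ t in r..B, (1 - (n : ℝ) * (F t) ^ (n - 1) + ((n : ℝ) - 1) * (F t) ^ n) := by
        rw [hRHS, hScompl r, hWdist r]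
        ring
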